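/- For any n and 1 ≤ k < n/2, the irrep Hamiltonian of the n-vertex star graph in the two-row irrep [n-k,k] has exactly two eigenvalues: 2(n − k + 1) and 2k. If n is even and k = n/2, the irrep Hamiltonian equals (n+2) times the identity. -/

import Mathlib

/-- The two-row Specht module `S^{[n-k,k]}` of `S_n`, realized inside the
permutation module on `k`-element subsets: `v` is supported on `k`-subsets and
has vanishing boundary. -/
def inTwoRowSpecht (n k : ℕ) (v : Finset (Fin n) → ℂ) : Prop :=
  (∀ S : Finset (Fin n), S.card ≠ k → v S = 0) ∧
  (∀ T : Finset (Fin n), T.card = k - 1 → ∑ a ∈ Tᶜ, v (insert a T) = 0)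

open Finset

section StarHamAux
variable {n : ℕ}

lemma mem_image_swap (n : ℕ) (a b x : Fin n) (S : Finset (Fin n)) :
    x ∈ S.image (Equiv.swap a b) ↔ Equiv.swap a b x ∈ S := by
  rw [show S.image ⇑(Equiv.swap a b) = S.map (Equiv.swap a b).toEmbedding by
    simp [Finset.map_eq_image], Finset.mem_map_equiv]
  simp

lemma image_swap_left {n : ℕ} {a b : Fin n} {S : Finset (Fin n)} (ha : a ∈ S) (hb : b ∉ S) :
    S.image (Equiv.swap a b) = insert b (S.erase a) := by
  have hab : a ≠ b := fun h => hb (h ▸ ha)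
  ext x
  rw [mem_image_swap, Equiv.swap_apply_def, Finset.mem_insert, Finset.mem_erase]
  split_ifs with h1 h2 <;> subst_vars
  · simp [hb, hab]
  · simp [ha]
  · constructor
    · intro h; exact Or.inr ⟨h1, h⟩
    · rintro (rfl | ⟨-, h⟩) <;> [exact absurd rfl h2; exact h]

lemma image_swap_both {n : ℕ} {a b : Fin n} {S : Finset (Fin n)} (ha : a ∈ S) (hb : b ∈ S) :
    S.image (Equiv.swap a b) = S := by
  ext x
  rw [mem_image_swap, Equiv.swap_apply_def]
  split_ifs with h1 h2 <;> subst_vars <;> simp [ha, hb]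

lemma image_swap_neither {n : ℕ} {a b : Fin n} {S : Finset (Fin n)} (ha : a ∉ S) (hb : b ∉ S) :
    S.image (Equiv.swap a b) = S := by
  ext x
  rw [mem_image_swap, Equiv.swap_apply_def]
  split_ifs with h1 h2 <;> subst_vars <;> simp [ha, hb]


/-- distinctness of pair entries -/
def Dpq (p q : ℕ → Fin n) (r : ℕ) : Prop :=
  ∀ i j : ℕ, i < r → j < r → p i ≠ q j ∧ (i ≠ j → p i ≠ p j ∧ q i ≠ q j)

noncomputable def gp (p q : ℕ → Fin n) (r : ℕ) (S : Finset (Fin n)) : ℂ :=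
  ∏ j ∈ Finset.range r, ((if p j ∈ S then 1 else 0) - if q j ∈ S then 1 else 0)

lemma meets_of_gp_ne {p q : ℕ → Fin n} {r : ℕ} {S : Finset (Fin n)}
    (hg : gp p q r S ≠ 0) : ∀ j < r, p j ∈ S ∨ q j ∈ S := by
  intro j hj
  by_contra hcon
  push_neg at hcon
  exact hg (Finset.prod_eq_zero (Finset.mem_range.mpr hj)
    (by simp [hcon.1, hcon.2]))

lemma card_le_of_meets {p q : ℕ → Fin n} {r : ℕ} {S : Finset (Fin n)}
    (hD : Dpq p q r) (h : ∀ j < r, p j ∈ S ∨ q j ∈ S) : r ≤ S.card := by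
  have := Finset.card_le_card_of_injOn
    (f := fun j => if p j ∈ S then p j else q j) (s := Finset.range r) (t := S)
    (fun j hj => by
      rw [Finset.mem_coe, Finset.mem_range] at hj
      rcases h j hj with h1 | h1
      · simp [h1]
      · by_cases h2 : p j ∈ S <;> simp [h2, h1])
    (by
      intro i hi j hj hij
      rw [Finset.mem_coe, Finset.mem_range] at hi hj
      by_contra hne
      simp only at hij
      split_ifs at hij with u1 u2 u2
      · exact ((hD i j hi hj).2 hne).1 hij
      · exact (hD i j hi hj).1 hij
      · exact (hD j i hj hi).1 hij.symm
      · exact ((hD i j hi hj).2 hne).2 hij)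
  simpa using this

lemma gp_zero_of_avoid {p q : ℕ → Fin n} {r : ℕ} {S : Finset (Fin n)} {x : Fin n}
    (hD : Dpq p q r) (hx : ∀ j < r, p j ≠ x ∧ q j ≠ x) (hxS : x ∈ S)
    (hcard : S.card ≤ r) : gp p q r S = 0 := by
  by_contra hg
  have hme := meets_of_gp_ne hg
  have : r ≤ (S.erase x).card := by
    apply card_le_of_meets hD
    intro j hj
    rcases hme j hj with h1 | h1
    · exact Or.inl (Finset.mem_erase.mpr ⟨(hx j hj).1, h1⟩)
    · exact Or.inr (Finset.mem_erase.mpr ⟨(hx j hj).2, h1⟩)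
  rw [Finset.card_erase_of_mem hxS] at this
  have hpos : 1 ≤ S.card := Finset.card_pos.mpr ⟨x, hxS⟩
  omega

lemma gp_boundary {p q : ℕ → Fin n} {r : ℕ} {T : Finset (Fin n)}
    (hD : Dpq p q r) (hT : T.card < r) : ∑ a ∈ Tᶜ, gp p q r (insert a T) = 0 := by
  -- find a missed pair
  have hmiss : ∃ j0 < r, p j0 ∉ T ∧ q j0 ∉ T := by
    by_contra hcon
    push_neg at hcon
    have : r ≤ T.card := card_le_of_meets hD (by
      intro j hj
      by_contra hc; push_neg at hc
      exact hc.2 (hcon j hj hc.1))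
    omega
  obtain ⟨j0, hj0r, hp0, hq0⟩ := hmiss
  have hpq0 : p j0 ≠ q j0 := (hD j0 j0 hj0r hj0r).1
  -- all terms outside {p j0, q j0} vanish
  have hz : ∀ a ∈ Tᶜ, a ∉ ({p j0, q j0} : Finset (Fin n)) → gp p q r (insert a T) = 0 := by
    intro a _ ha
    simp only [Finset.mem_insert, Finset.mem_singleton] at ha
    push_neg at ha
    apply Finset.prod_eq_zero (Finset.mem_range.mpr hj0r)
    have hb1 : p j0 ≠ a := Ne.symm ha.1
    have hb2 : q j0 ≠ a := Ne.symm ha.2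
    have h1 : p j0 ∉ insert a T := by simp [Finset.mem_insert, hp0, hb1]
    have h2 : q j0 ∉ insert a T := by simp [Finset.mem_insert, hq0, hb2]
    simp [h1, h2]
  have hsub : ({p j0, q j0} : Finset (Fin n)) ⊆ Tᶜ := by
    intro x hx
    simp only [Finset.mem_insert, Finset.mem_singleton] at hx
    rcases hx with rfl | rfl <;> simp [hp0, hq0]
  rw [← Finset.sum_subset hsub (fun a ha hna => hz a ha hna)]
  rw [Finset.sum_pair hpq0]
  -- compute the two terms
  have key : ∀ (x y : Fin n), x ∉ T → y ∉ T → x ≠ y →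
      (∀ j < r, j ≠ j0 → p j ≠ x ∧ q j ≠ x) →
      gp p q r (insert x T) =
        ((if p j0 ∈ insert x T then 1 else 0) - if q j0 ∈ insert x T then (1:ℂ) else 0) *
          ∏ j ∈ (Finset.range r).erase j0,
            ((if p j ∈ T then 1 else 0) - if q j ∈ T then 1 else 0) := by
    intro x y hx hy hxy havoid
    rw [gp, ← Finset.mul_prod_erase _ _ (Finset.mem_range.mpr hj0r)]
    congr 1
    apply Finset.prod_congr rfl
    intro j hj
    rw [Finset.mem_erase, Finset.mem_range] at hj
    have h := havoid j hj.2 hj.1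
    simp [Finset.mem_insert, h.1, h.2]
  have e1 := key (p j0) (q j0) hp0 hq0 hpq0 (fun j hj hjne =>
    ⟨((hD j j0 hj hj0r).2 hjne).1, fun h => (hD j0 j hj0r hj).1 h.symm⟩)
  have e2 := key (q j0) (p j0) hq0 hp0 hpq0.symm (fun j hj hjne =>
    ⟨(hD j j0 hj hj0r).1, ((hD j j0 hj hj0r).2 hjne).2⟩)
  rw [e1, e2]
  have m1 : p j0 ∈ insert (p j0) T := Finset.mem_insert_self _ _
  have hqp : q j0 ≠ p j0 := Ne.symm hpq0
  have m2 : q j0 ∉ insert (p j0) T := by simp [hq0, hqp]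
  have m3 : q j0 ∈ insert (q j0) T := Finset.mem_insert_self _ _
  have m4 : p j0 ∉ insert (q j0) T := by simp [hp0, hpq0]
  rw [if_pos m1, if_neg m2, if_pos m3, if_neg m4]
  ring

def ppf (n : ℕ) (hn : 0 < n) (j : ℕ) : Fin n :=
  if h : 2*j+1 < n then ⟨2*j, by omega⟩ else ⟨0, hn⟩
def qqf (n : ℕ) (hn : 0 < n) (j : ℕ) : Fin n :=
  if h : 2*j+1 < n then ⟨2*j+1, h⟩ else ⟨0, hn⟩

lemma ppf_val {hn : 0 < n} {j : ℕ} (h : 2*j+1 < n) : (ppf n hn j : ℕ) = 2*j := by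
  rw [ppf, dif_pos h]
lemma qqf_val {hn : 0 < n} {j : ℕ} (h : 2*j+1 < n) : (qqf n hn j : ℕ) = 2*j+1 := by
  rw [qqf, dif_pos h]

lemma Dpq_ppf {hn : 0 < n} {r : ℕ} (hr : 2*r ≤ n) : Dpq (ppf n hn) (qqf n hn) r := by
  intro i j hi hj
  have hi' : 2*i+1 < n := by omega
  have hj' : 2*j+1 < n := by omega
  refine ⟨?_, fun hij => ⟨?_, ?_⟩⟩ <;>
    (intro h; apply_fun (Fin.val) at h) <;>
    [rw [ppf_val hi', qqf_val hj'] at h; rw [ppf_val hi', ppf_val hj'] at h;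
     rw [qqf_val hi', qqf_val hj'] at h] <;> omega

lemma ppf_ne_last {hn : 0 < n} {r : ℕ} (hr : 2*r < n) {j : ℕ} (hj : j < r) {c : Fin n}
    (hc : (c:ℕ) = n - 1) : ppf n hn j ≠ c ∧ qqf n hn j ≠ c := by
  have hj' : 2*j+1 < n := by omega
  constructor <;> (intro h; apply_fun (Fin.val) at h; rw [hc] at h)
  · rw [ppf_val hj'] at h; omega
  · rw [qqf_val hj'] at h; omega

lemma card_ppf_image {hn : 0 < n} {r : ℕ} (hr : 2*r ≤ n) :
    ((Finset.range r).image (ppf n hn)).card = r := by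
  rw [Finset.card_image_of_injOn]
  · exact Finset.card_range r
  · intro i hi j hj hij
    rw [Finset.mem_coe, Finset.mem_range] at hi hj
    apply_fun (Fin.val) at hij
    rw [ppf_val (by omega), ppf_val (by omega)] at hij
    omega

lemma gp_base {hn : 0 < n} {r : ℕ} (hr : 2*r ≤ n) :
    gp (ppf n hn) (qqf n hn) r ((Finset.range r).image (ppf n hn)) = 1 := by
  rw [gp]
  apply Finset.prod_eq_one
  intro j hj
  rw [Finset.mem_range] at hj
  have hj' : 2*j+1 < n := by omega
  have h1 : ppf n hn j ∈ (Finset.range r).image (ppf n hn) :=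
    Finset.mem_image_of_mem _ (Finset.mem_range.mpr hj)
  have h2 : qqf n hn j ∉ (Finset.range r).image (ppf n hn) := by
    rw [Finset.mem_image]
    rintro ⟨i, hi, hiq⟩
    rw [Finset.mem_range] at hi
    apply_fun (Fin.val) at hiq
    rw [ppf_val (by omega), qqf_val hj'] at hiq
    omega
  rw [if_pos h1, if_neg h2]
  ring

lemma ham_offcard {n k : ℕ} {v : Finset (Fin n) → ℂ} (hv : inTwoRowSpecht n k v)
    (c : Fin n) {S : Finset (Fin n)} (hS : S.card ≠ k) :
    ∑ i ∈ Finset.univ.erase c, (2:ℂ) * (v S - v (S.image (Equiv.swap i c))) = 0 := by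
  apply Finset.sum_eq_zero
  intro i _
  have h1 : v S = 0 := hv.1 S hS
  have h2 : v (S.image (Equiv.swap i c)) = 0 := by
    apply hv.1
    rwa [Finset.card_image_of_injective _ (Equiv.injective _)]
  rw [h1, h2]; ring

lemma ham_high {n k : ℕ} {v : Finset (Fin n) → ℂ} (hv : inTwoRowSpecht n k v)
    {c : Fin n} {S : Finset (Fin n)} (hS : S.card = k) (hc : c ∈ S) :
    ∑ i ∈ Finset.univ.erase c, (2:ℂ) * (v S - v (S.image (Equiv.swap i c))) =
      2 * ((n:ℂ) - k + 1) * v S := by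
  have hkn : k ≤ n := by
    have := Finset.card_le_univ S
    simpa [hS, Fintype.card_fin] using this
  have hsplit : Finset.univ.erase c = (S.erase c) ∪ Sᶜ := by
    ext x
    simp only [Finset.mem_erase, Finset.mem_union, Finset.mem_compl, Finset.mem_univ,
      and_true]
    by_cases hx : x ∈ S
    · constructor
      · intro h; exact Or.inl ⟨h, hx⟩
      · rintro (⟨h, -⟩ | h); exact h; exact absurd hx h
    · constructor
      · intro h; exact Or.inr hx
      · rintro (⟨-, h⟩ | -); exact absurd h hx
        intro h; subst h; exact hx hc
  have hdisj : Disjoint (S.erase c) Sᶜ := by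
    rw [Finset.disjoint_left]
    intro x hx hx2
    exact (Finset.mem_compl.mp hx2) (Finset.mem_of_mem_erase hx)
  rw [hsplit, Finset.sum_union hdisj]
  have h1 : ∑ i ∈ S.erase c, (2:ℂ) * (v S - v (S.image (Equiv.swap i c))) = 0 := by
    apply Finset.sum_eq_zero
    intro i hi
    rw [image_swap_both (Finset.mem_of_mem_erase hi) hc]
    ring
  have h2 : ∀ i ∈ Sᶜ, (2:ℂ) * (v S - v (S.image (Equiv.swap i c))) =
      2 * v S - 2 * v (insert i (S.erase c)) := by
    intro i hi
    rw [Equiv.swap_comm, image_swap_left hc (Finset.mem_compl.mp hi)]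
    ring
  rw [h1, Finset.sum_congr rfl h2, Finset.sum_sub_distrib, Finset.sum_const]
  -- boundary
  have hT : (S.erase c).card = k - 1 := by rw [Finset.card_erase_of_mem hc, hS]
  have hbd := hv.2 (S.erase c) hT
  have hTc : (S.erase c)ᶜ = insert c Sᶜ := by
    ext x
    simp only [Finset.mem_compl, Finset.mem_erase, Finset.mem_insert]
    by_cases hx : x = c <;> simp [hx]
  rw [hTc, Finset.sum_insert (by simp [hc]), Finset.insert_erase hc] at hbd
  have hsum : ∑ i ∈ Sᶜ, v (insert i (S.erase c)) = - v S := by linear_combination hbd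
  have hcard : ((Sᶜ.card : ℕ) : ℂ) = (n:ℂ) - k := by
    rw [Finset.card_compl, Fintype.card_fin, hS, Nat.cast_sub hkn]
  rw [nsmul_eq_mul, ← Finset.mul_sum, hsum, hcard]
  ring

lemma ham_low {n k : ℕ} {v : Finset (Fin n) → ℂ} (hv : inTwoRowSpecht n k v)
    {c : Fin n} {S : Finset (Fin n)} (hS : S.card = k) (hc : c ∉ S) :
    ∑ i ∈ Finset.univ.erase c, (2:ℂ) * (v S - v (S.image (Equiv.swap i c))) =
      2 * (k:ℂ) * v S - 2 * ∑ i ∈ S, v (insert c (S.erase i)) := by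
  have hsub : S ⊆ Finset.univ.erase c := by
    intro x hx
    rw [Finset.mem_erase]
    exact ⟨fun h => hc (h ▸ hx), Finset.mem_univ x⟩
  rw [← Finset.sum_subset hsub (fun i _ hiS => by
    rw [image_swap_neither hiS hc]; ring)]
  have h2 : ∀ i ∈ S, (2:ℂ) * (v S - v (S.image (Equiv.swap i c))) =
      2 * v S - 2 * v (insert c (S.erase i)) := by
    intro i hi
    rw [image_swap_left hi hc]; ring
  rw [Finset.sum_congr rfl h2, Finset.sum_sub_distrib, Finset.sum_const, hS,
    nsmul_eq_mul, ← Finset.mul_sum]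
  ring

noncomputable def Hcf (k m : ℕ) : ℂ :=
  (-1)^(k-1-m) * (Nat.factorial m : ℂ) * (Nat.factorial (k-1-m) : ℂ)

lemma Hcf_rec {k m : ℕ} (hm : m < k) :
    ((m+1 : ℕ):ℂ) * Hcf k m + ((k:ℂ) - ((m+1:ℕ):ℂ)) * Hcf k (m+1) =
      if m + 1 = k then (Nat.factorial k : ℂ) else 0 := by
  by_cases h : m + 1 = k
  · rw [if_pos h]
    have h1 : k - 1 - m = 0 := by omega
    have h2 : (k:ℂ) - ((m+1:ℕ):ℂ) = 0 := by rw [h]; ring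
    rw [h2, Hcf, h1, zero_mul, add_zero]
    subst h
    push_cast [Nat.factorial_succ, Nat.factorial_zero]
    ring
  · rw [if_neg h]
    obtain ⟨e, he⟩ : ∃ e, k - 1 - m = e + 1 := ⟨k - 2 - m, by omega⟩
    have he2 : k - 1 - (m+1) = e := by omega
    have hke : k = m + e + 2 := by omega
    have hc : (k:ℂ) - ((m+1:ℕ):ℂ) = ((e+1 : ℕ):ℂ) := by
      rw [hke]; push_cast; ring
    rw [Hcf, Hcf, he, he2, hc]
    push_cast [Nat.factorial_succ, Nat.factorial_zero]
    ring

lemma sumHc {n k : ℕ} (hn : 2*k = n) {R : Finset (Fin n)} (hR : R.card = k+1)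
    {S' : Finset (Fin n)} (hS' : S'.card = k) :
    ∑ j ∈ S', Hcf k ((S'.erase j ∩ R).card) =
      if (S' ∩ R).card = k then (Nat.factorial k : ℂ) else 0 := by
  set P := S' ∩ R with hP
  have hpk : P.card ≤ k := hS' ▸ Finset.card_le_card Finset.inter_subset_left
  have hp1 : 1 ≤ P.card := by
    have h1 := Finset.card_union_add_card_inter S' R
    have h2 : (S' ∪ R).card ≤ n := by
      have := Finset.card_le_univ (S' ∪ R)
      simpa [Fintype.card_fin] using this
    rw [← hP] at h1
    omega
  have hsplit : S' = P ∪ (S' \ R) := by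
    ext x; simp only [hP, Finset.mem_union, Finset.mem_inter, Finset.mem_sdiff]; tauto
  have hdisj : Disjoint P (S' \ R) := by
    rw [Finset.disjoint_left]
    intro x hx hx2
    rw [hP, Finset.mem_inter] at hx
    exact (Finset.mem_sdiff.mp hx2).2 hx.2
  have hkey : ∑ j ∈ S', Hcf k ((S'.erase j ∩ R).card) =
      (∑ j ∈ P, Hcf k ((S'.erase j ∩ R).card)) +
        ∑ j ∈ S' \ R, Hcf k ((S'.erase j ∩ R).card) := by
    rw [← Finset.sum_union hdisj]
    exact Finset.sum_congr hsplit (fun _ _ => rfl)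
  rw [hkey]
  have e1 : ∀ j ∈ P, (S'.erase j ∩ R) = P.erase j := by
    intro j hj
    ext x
    simp only [Finset.mem_inter, Finset.mem_erase, hP]
    tauto
  have e2 : ∀ j ∈ S' \ R, (S'.erase j ∩ R) = P := by
    intro j hj
    rw [Finset.mem_sdiff] at hj
    ext x
    simp only [Finset.mem_inter, Finset.mem_erase, hP]
    constructor
    · rintro ⟨⟨-, h1⟩, h2⟩; exact ⟨h1, h2⟩
    · rintro ⟨h1, h2⟩; exact ⟨⟨fun hh => hj.2 (hh ▸ h2), h1⟩, h2⟩
  have c1 : ∀ j ∈ P, (S'.erase j ∩ R).card = P.card - 1 := by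
    intro j hj; rw [e1 j hj, Finset.card_erase_of_mem hj]
  have c2 : ∀ j ∈ S' \ R, (S'.erase j ∩ R).card = P.card := by
    intro j hj; rw [e2 j hj]
  have A1 : ∑ j ∈ P, Hcf k ((S'.erase j ∩ R).card) = P.card • Hcf k (P.card - 1) := by
    rw [Finset.sum_congr rfl (fun j hj => congrArg (Hcf k) (c1 j hj)), Finset.sum_const]
  have A2 : ∑ j ∈ S' \ R, Hcf k ((S'.erase j ∩ R).card) = (S' \ R).card • Hcf k P.card := by
    rw [Finset.sum_congr rfl (fun j hj => congrArg (Hcf k) (c2 j hj)), Finset.sum_const]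
  rw [A1, A2]
  have hcsd : (S' \ R).card = k - P.card := by
    have h5 := Finset.card_sdiff_add_card_inter S' R
    rw [← hP] at h5
    omega
  obtain ⟨m, hm⟩ : ∃ m, P.card = m + 1 := ⟨P.card - 1, by omega⟩
  have hmk : m < k := by omega
  have := Hcf_rec hmk
  rw [hm, hcsd, hm, nsmul_eq_mul, nsmul_eq_mul]
  simp only [Nat.add_sub_cancel]
  have hcast : ((k - (m+1) : ℕ) : ℂ) = (k:ℂ) - ((m+1:ℕ):ℂ) := by
    rw [Nat.cast_sub (by omega)]
  rw [hcast]
  convert this using 2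

lemma specht_CI {n k : ℕ} (hn : 2*k = n) (hk : 1 ≤ k) {v : Finset (Fin n) → ℂ}
    (hv : inTwoRowSpecht n k v) {R : Finset (Fin n)} (hR : R.card = k+1) :
    ∑ x ∈ R, v (R.erase x) = 0 := by
  have key0 : (0:ℂ) = ∑ T ∈ Finset.powersetCard (k-1) Finset.univ,
      ∑ a ∈ Tᶜ, Hcf k ((T ∩ R).card) * v (insert a T) := by
    symm
    apply Finset.sum_eq_zero
    intro T hT
    rw [← Finset.mul_sum, hv.2 T (Finset.mem_powersetCard_univ.mp hT), mul_zero]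
  have keyswap : ∑ T ∈ Finset.powersetCard (k-1) Finset.univ,
      ∑ a ∈ Tᶜ, Hcf k ((T ∩ R).card) * v (insert a T) =
    ∑ S' ∈ Finset.powersetCard k Finset.univ,
      ∑ j ∈ S', Hcf k ((S'.erase j ∩ R).card) * v S' := by
    rw [Finset.sum_sigma', Finset.sum_sigma']
    apply Finset.sum_nbij' (i := fun x => (⟨insert x.2 x.1, x.2⟩ : Σ _ : Finset (Fin n), Fin n))
      (j := fun x => (⟨x.1.erase x.2, x.2⟩ : Σ _ : Finset (Fin n), Fin n))
    · intro a ha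
      rw [Finset.mem_sigma] at ha
      have h1 := Finset.mem_powersetCard_univ.mp ha.1
      have h2 := Finset.mem_compl.mp ha.2
      rw [Finset.mem_sigma]
      constructor
      · rw [Finset.mem_powersetCard_univ, Finset.card_insert_of_notMem h2, h1]
        omega
      · exact Finset.mem_insert_self _ _
    · intro a ha
      rw [Finset.mem_sigma] at ha
      have h1 := Finset.mem_powersetCard_univ.mp ha.1
      rw [Finset.mem_sigma]
      constructor
      · rw [Finset.mem_powersetCard_univ, Finset.card_erase_of_mem ha.2, h1]
      · simp
    · intro a ha
      rw [Finset.mem_sigma] at ha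
      have h2 := Finset.mem_compl.mp ha.2
      simp [Finset.erase_insert h2]
    · intro a ha
      rw [Finset.mem_sigma] at ha
      simp [Finset.insert_erase ha.2]
    · intro a ha
      rw [Finset.mem_sigma] at ha
      have h2 := Finset.mem_compl.mp ha.2
      simp [Finset.erase_insert h2]
  have keyHc : ∑ S' ∈ Finset.powersetCard k Finset.univ,
      ∑ j ∈ S', Hcf k ((S'.erase j ∩ R).card) * v S' =
    ∑ S' ∈ Finset.powersetCard k Finset.univ,
      (if (S' ∩ R).card = k then (Nat.factorial k : ℂ) else 0) * v S' := by
    apply Finset.sum_congr rfl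
    intro S' hS'
    rw [← Finset.sum_mul, sumHc hn hR (Finset.mem_powersetCard_univ.mp hS')]
  have keyfilter : (Finset.powersetCard k Finset.univ).filter
      (fun S' => (S' ∩ R).card = k) = R.image (fun x => R.erase x) := by
    ext S'
    rw [Finset.mem_filter, Finset.mem_image, Finset.mem_powersetCard_univ]
    constructor
    · rintro ⟨h1, h2⟩
      have hPR : S' ∩ R = S' :=
        Finset.eq_of_subset_of_card_le Finset.inter_subset_left (by omega)
      have hsub : S' ⊆ R := by rw [← hPR]; exact Finset.inter_subset_right
      have hne : (R \ S').Nonempty := by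
        rw [← Finset.card_pos, Finset.card_sdiff_of_subset hsub]
        omega
      obtain ⟨x, hx⟩ := hne
      rw [Finset.mem_sdiff] at hx
      refine ⟨x, hx.1, ?_⟩
      symm
      apply Finset.eq_of_subset_of_card_le
      · exact Finset.subset_erase.mpr ⟨hsub, hx.2⟩
      · rw [Finset.card_erase_of_mem hx.1, hR, h1]
        omega
    · rintro ⟨x, hx, rfl⟩
      constructor
      · rw [Finset.card_erase_of_mem hx, hR]
        omega
      · rw [Finset.inter_eq_left.mpr (Finset.erase_subset _ _),
          Finset.card_erase_of_mem hx, hR]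
        omega
  have hinj : ∀ x ∈ R, ∀ y ∈ R, R.erase x = R.erase y → x = y := by
    intro x hx y hy h
    by_contra hne
    have : x ∈ R.erase y := Finset.mem_erase.mpr ⟨hne, hx⟩
    rw [← h, Finset.mem_erase] at this
    exact this.1 rfl
  have final : (0:ℂ) = (Nat.factorial k : ℂ) * ∑ x ∈ R, v (R.erase x) := by
    rw [key0, keyswap, keyHc]
    simp only [ite_mul, zero_mul]
    rw [← Finset.sum_filter, keyfilter, Finset.sum_image hinj, Finset.mul_sum]
  have hfac : (Nat.factorial k : ℂ) ≠ 0 :=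
    Nat.cast_ne_zero.mpr (Nat.factorial_ne_zero k)
  rcases mul_eq_zero.mp final.symm with h | h
  · exact absurd h hfac
  · exact h

lemma exists_eigvec1 (n k : ℕ) (hk1 : 1 ≤ k) (h2 : 2*k < n) :
    ∃ v : Finset (Fin n) → ℂ, inTwoRowSpecht n k v ∧ v ≠ 0 ∧
      ∀ S : Finset (Fin n), S.card = k → (⟨n-1, by omega⟩ : Fin n) ∈ S → v S = 0 := by
  have hn : 0 < n := by omega
  set c : Fin n := ⟨n-1, by omega⟩ with hcdef
  have hcval : (c : ℕ) = n - 1 := rfl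
  set p := ppf n hn
  set q := qqf n hn
  have hD : Dpq p q k := Dpq_ppf (by omega)
  have hav : ∀ j < k, p j ≠ c ∧ q j ≠ c := fun j hj => ppf_ne_last h2 hj hcval
  set v : Finset (Fin n) → ℂ := fun S => if S.card = k then gp p q k S else 0 with hv
  have hvdef : ∀ S : Finset (Fin n), v S = if S.card = k then gp p q k S else 0 :=
    fun _ => rfl
  refine ⟨v, ⟨?_, ?_⟩, ?_, ?_⟩
  · intro S hS; rw [hvdef, if_neg hS]
  · intro T hT
    have hcongr : ∀ a ∈ Tᶜ, v (insert a T) = gp p q k (insert a T) := by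
      intro a ha
      rw [hvdef, if_pos]
      rw [Finset.card_insert_of_notMem (Finset.mem_compl.mp ha), hT]
      omega
    rw [Finset.sum_congr rfl hcongr]
    exact gp_boundary hD (by omega)
  · intro hzero
    have h0 := congrFun hzero ((Finset.range k).image p)
    rw [hvdef, if_pos (card_ppf_image (by omega)), gp_base (by omega)] at h0
    simp at h0
  · intro S hS hc
    rw [hvdef, if_pos hS]
    exact gp_zero_of_avoid hD hav hc (le_of_eq hS)

lemma exists_eigvec2 (n k : ℕ) (hk1 : 1 ≤ k) (h2 : 2*k < n) :
    ∃ v : Finset (Fin n) → ℂ, inTwoRowSpecht n k v ∧ v ≠ 0 ∧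
      ∀ S : Finset (Fin n), S.card = k → (⟨n-1, by omega⟩ : Fin n) ∉ S →
        ∑ i ∈ S, v (insert ⟨n-1, by omega⟩ (S.erase i)) = -((n:ℂ) - 2*k + 1) * v S := by
  have hn : 0 < n := by omega
  set c : Fin n := ⟨n-1, by omega⟩ with hcdef
  have hcval : (c : ℕ) = n - 1 := rfl
  set p := ppf n hn
  set q := qqf n hn
  have hD : Dpq p q (k-1) := Dpq_ppf (by omega)
  have hav : ∀ j < k-1, p j ≠ c ∧ q j ≠ c := fun j hj => ppf_ne_last (by omega) hj hcval
  set gg : Finset (Fin n) → ℂ := gp p q (k-1) with hgg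
  have ggz : ∀ X : Finset (Fin n), X.card ≤ k-1 → c ∈ X → gg X = 0 :=
    fun X h1 h2' => gp_zero_of_avoid hD hav h2' h1
  set β : ℂ := (n:ℂ) - 2*k + 1 with hβ
  set v : Finset (Fin n) → ℂ := fun S => if S.card = k then
      (if c ∈ S then β * gg (S.erase c) else - ∑ i ∈ S, gg (S.erase i)) else 0 with hv
  have hvdef : ∀ S : Finset (Fin n), v S = if S.card = k then
      (if c ∈ S then β * gg (S.erase c) else - ∑ i ∈ S, gg (S.erase i)) else 0 :=
    fun _ => rfl
  have hvhigh : ∀ S : Finset (Fin n), S.card = k → c ∈ S → v S = β * gg (S.erase c) := by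
    intro S h1 h2'
    rw [hvdef, if_pos h1, if_pos h2']
  have hvlow : ∀ S : Finset (Fin n), S.card = k → c ∉ S →
      v S = - ∑ i ∈ S, gg (S.erase i) := by
    intro S h1 h2'
    rw [hvdef, if_pos h1, if_neg h2']
  refine ⟨v, ⟨?_, ?_⟩, ?_, ?_⟩
  · intro S hS; rw [hvdef, if_neg hS]
  · -- boundary
    intro T hT
    have hins : ∀ a ∈ Tᶜ, (insert a T).card = k := by
      intro a ha
      rw [Finset.card_insert_of_notMem (Finset.mem_compl.mp ha), hT]; omega
    by_cases hcT : c ∈ T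
    · have hk2 : 2 ≤ k := by
        have : 0 < T.card := Finset.card_pos.mpr ⟨c, hcT⟩
        omega
      have hT' : (T.erase c).card = k - 2 := by
        rw [Finset.card_erase_of_mem hcT, hT]
        omega
      have hstep : ∀ a ∈ Tᶜ, v (insert a T) = β * gg (insert a (T.erase c)) := by
        intro a ha
        have hac : a ≠ c := fun h => (Finset.mem_compl.mp ha) (h ▸ hcT)
        rw [hvhigh _ (hins a ha) (Finset.mem_insert_of_mem hcT),
          Finset.erase_insert_of_ne hac]
      rw [Finset.sum_congr rfl hstep, ← Finset.mul_sum]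
      have hTc : (T.erase c)ᶜ = insert c Tᶜ := by
        ext x
        simp only [Finset.mem_compl, Finset.mem_erase, Finset.mem_insert]
        by_cases hx : x = c <;> simp [hx]
      have hbd := gp_boundary hD (show (T.erase c).card < k - 1 by omega)
      rw [hTc, Finset.sum_insert (by simp [hcT])] at hbd
      have hz : gp p q (k-1) (insert c (T.erase c)) = 0 := by
        apply ggz
        · rw [Finset.card_insert_of_notMem (by simp), hT']; omega
        · exact Finset.mem_insert_self _ _
      rw [hz, zero_add] at hbd
      rw [hgg, hbd, mul_zero]
    · -- c ∉ T
      have hcTc : c ∈ Tᶜ := Finset.mem_compl.mpr hcT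
      rw [← Finset.insert_erase hcTc, Finset.sum_insert (by simp)]
      have hterm1 : v (insert c T) = β * gg T := by
        rw [hvhigh _ (hins c hcTc) (Finset.mem_insert_self _ _), Finset.erase_insert hcT]
      have hstep : ∀ a ∈ Tᶜ.erase c, v (insert a T) =
          -(gg T + ∑ i ∈ T, gg (insert a (T.erase i))) := by
        intro a ha
        rw [Finset.mem_erase] at ha
        have haT : a ∉ T := Finset.mem_compl.mp ha.2
        have hcin : c ∉ insert a T := by
          rw [Finset.mem_insert]
          rintro (h | h); exact ha.1 h.symm; exact hcT h
        rw [hvlow _ (hins a ha.2) hcin, Finset.sum_insert haT, Finset.erase_insert haT]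
        congr 1
        congr 1
        apply Finset.sum_congr rfl
        intro i hi
        rw [Finset.erase_insert_of_ne (fun h => haT (by rw [h]; exact hi))]
      rw [hterm1, Finset.sum_congr rfl hstep]
      have hinner : ∀ i ∈ T, ∑ a ∈ Tᶜ.erase c, gg (insert a (T.erase i)) = - gg T := by
        intro i hi
        have hk2 : 2 ≤ k := by
          have : 0 < T.card := Finset.card_pos.mpr ⟨i, hi⟩
          omega
        have hic : i ≠ c := fun h => hcT (h ▸ hi)
        have hT'' : (T.erase i).card = k - 2 := by
          rw [Finset.card_erase_of_mem hi, hT]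
          omega
        have hTc2 : (T.erase i)ᶜ = insert i (insert c (Tᶜ.erase c)) := by
          rw [Finset.insert_erase hcTc]
          ext x
          simp only [Finset.mem_compl, Finset.mem_erase, Finset.mem_insert]
          by_cases hx : x = i <;> simp [hx, hi]
        have hbd := gp_boundary hD (show (T.erase i).card < k - 1 by omega)
        rw [hTc2, Finset.sum_insert (by
            rw [Finset.mem_insert]
            rintro (h | h); exact hic h
            exact Finset.mem_compl.mp (Finset.mem_erase.mp h).2 hi),
          Finset.sum_insert (by simp)] at hbd
        rw [← hgg, Finset.insert_erase hi] at hbd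
        have hz2 : gg (insert c (T.erase i)) = 0 := by
          apply ggz
          · rw [Finset.card_insert_of_notMem (fun h => hcT (Finset.mem_of_mem_erase h)),
              hT'']
            omega
          · exact Finset.mem_insert_self _ _
        rw [hz2, zero_add] at hbd
        linear_combination hbd
      have hN : (Tᶜ.erase c).card = n - k := by
        rw [Finset.card_erase_of_mem hcTc, Finset.card_compl, Fintype.card_fin, hT]
        omega
      have hNc : (((Tᶜ.erase c).card : ℕ) : ℂ) = (n:ℂ) - k := by
        rw [hN, Nat.cast_sub (by omega : k ≤ n)]
      have hkc : (((k - 1 : ℕ)) : ℂ) = (k:ℂ) - 1 := by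
        rw [Nat.cast_sub hk1]
        norm_num
      have hterm2 : ∀ a ∈ Tᶜ.erase c, (-(gg T + ∑ i ∈ T, gg (insert a (T.erase i))))
          = -gg T - ∑ i ∈ T, gg (insert a (T.erase i)) := fun a _ => by ring
      rw [Finset.sum_congr rfl hterm2, Finset.sum_sub_distrib, Finset.sum_const,
        Finset.sum_comm, Finset.sum_congr rfl hinner, Finset.sum_const, hT,
        nsmul_eq_mul, nsmul_eq_mul, hNc, hkc, hβ]
      ring
  · -- v ≠ 0
    intro hzero
    have hcim : c ∉ (Finset.range (k-1)).image p := by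
      rw [Finset.mem_image]
      rintro ⟨j, hj, hjc⟩
      rw [Finset.mem_range] at hj
      exact (hav j hj).1 hjc
    have hS0 : (insert c ((Finset.range (k-1)).image p)).card = k := by
      rw [Finset.card_insert_of_notMem hcim, card_ppf_image (by omega : 2*(k-1) ≤ n)]
      omega
    have h0 := congrFun hzero (insert c ((Finset.range (k-1)).image p))
    rw [hvdef, if_pos hS0, if_pos (Finset.mem_insert_self _ _),
      Finset.erase_insert hcim] at h0
    have hbase : gg ((Finset.range (k-1)).image p) = 1 := gp_base (by omega : 2*(k-1) ≤ n)
    rw [hbase, mul_one] at h0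
    have hβne : β ≠ 0 := by
      rw [hβ]
      have hcast : ((n - 2*k + 1 : ℕ) : ℂ) = (n:ℂ) - 2*(k:ℂ) + 1 := by
        rw [Nat.cast_add, Nat.cast_sub (by omega : 2*k ≤ n), Nat.cast_mul]
        norm_num
      rw [← hcast]
      exact Nat.cast_ne_zero.mpr (by omega)
    simp only [Pi.zero_apply] at h0
    exact hβne h0
  · -- eigen relation
    intro S hS hcS
    have hstep : ∀ i ∈ S, v (insert c (S.erase i)) = β * gg (S.erase i) := by
      intro i hi
      have h1 : c ∉ S.erase i := fun h => hcS (Finset.mem_of_mem_erase h)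
      have hcard : (insert c (S.erase i)).card = k := by
        rw [Finset.card_insert_of_notMem h1, Finset.card_erase_of_mem hi, hS]
        omega
      rw [hvhigh _ hcard (Finset.mem_insert_self _ _), Finset.erase_insert h1]
    rw [Finset.sum_congr rfl hstep, ← Finset.mul_sum, hvlow S hS hcS]
    ring

end StarHamAux

/-- For the `n`-vertex star graph (edges `(i, n)` for `i < n`, with center the
last vertex), the irrep Hamiltonian `ρ_{[n-k,k]} (Σ_{i<n} 2(e − (i n)))` in the
two-row irrep `[n-k,k]` (realized on the Specht model, with
`(ρ(π) v)(S) = v(π⁻¹ S)`):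
for `1 ≤ k < n/2` it has exactly two (distinct) eigenvalues, `2(n − k + 1)` and
`2k`; and if `n` is even and `k = n/2`, it equals `(n+2)` times the identity. -/
theorem star_irrep_hamiltonian_eigenvalues (n k : ℕ) (hk1 : 1 ≤ k)
    (hk2 : 2 * k ≤ n) :
    (2 * k < n →
      ({μ : ℂ | ∃ v : Finset (Fin n) → ℂ, inTwoRowSpecht n k v ∧ v ≠ 0 ∧
          ∀ S : Finset (Fin n),
            (∑ i ∈ (Finset.univ : Finset (Fin n)).erase ⟨n - 1, by omega⟩,
              (2 : ℂ) * (v S - v (S.image (Equiv.swap i ⟨n - 1, by omega⟩))))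
              = μ * v S}
          = {2 * ((n : ℂ) - (k : ℂ) + 1), 2 * (k : ℂ)} ∧
        2 * ((n : ℂ) - (k : ℂ) + 1) ≠ 2 * (k : ℂ))) ∧
    (2 * k = n →
      ∀ v : Finset (Fin n) → ℂ, inTwoRowSpecht n k v →
        ∀ S : Finset (Fin n),
          (∑ i ∈ (Finset.univ : Finset (Fin n)).erase ⟨n - 1, by omega⟩,
            (2 : ℂ) * (v S - v (S.image (Equiv.swap i ⟨n - 1, by omega⟩))))
            = ((n : ℂ) + 2) * v S) := by
  have hn0 : 0 < n := by omega
  constructor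
  · intro h2
    constructor
    · ext μ
      simp only [Set.mem_setOf_eq, Set.mem_insert_iff, Set.mem_singleton_iff]
      constructor
      · rintro ⟨v, hv, hne, heig⟩
        by_cases hA : ∃ S : Finset (Fin n), (⟨n-1, by omega⟩ : Fin n) ∈ S ∧ v S ≠ 0
        · obtain ⟨S, hcS, hvS⟩ := hA
          have hSk : S.card = k := by
            by_contra hk
            exact hvS (hv.1 S hk)
          left
          have h1 := heig S
          rw [ham_high hv hSk hcS] at h1
          exact (mul_right_cancel₀ hvS h1).symm
        · push_neg at hA
          obtain ⟨S, hvS⟩ := Function.ne_iff.mp hne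
          have hSk : S.card = k := by
            by_contra hk
            exact hvS (hv.1 S hk)
          have hcS : (⟨n-1, by omega⟩ : Fin n) ∉ S := fun h => hvS (hA S h)
          right
          have h1 := heig S
          rw [ham_low hv hSk hcS] at h1
          have hz : ∑ i ∈ S, v (insert (⟨n-1, by omega⟩ : Fin n) (S.erase i)) = 0 := by
            apply Finset.sum_eq_zero
            intro i hi
            apply hA
            exact Finset.mem_insert_self _ _
          rw [hz] at h1
          have h1' : (2 * (k:ℂ)) * v S = μ * v S := by linear_combination h1
          exact (mul_right_cancel₀ hvS h1').symm
      · rintro (rfl | rfl)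
        · obtain ⟨v, hv, hne, hprop⟩ := exists_eigvec2 n k hk1 h2
          refine ⟨v, hv, hne, fun S => ?_⟩
          by_cases hSk : S.card = k
          · by_cases hcS : (⟨n-1, by omega⟩ : Fin n) ∈ S
            · rw [ham_high hv hSk hcS]
            · rw [ham_low hv hSk hcS, hprop S hSk hcS]
              ring
          · rw [ham_offcard hv _ hSk, hv.1 S hSk, mul_zero]
        · obtain ⟨v, hv, hne, hprop⟩ := exists_eigvec1 n k hk1 h2
          refine ⟨v, hv, hne, fun S => ?_⟩
          by_cases hSk : S.card = k
          · by_cases hcS : (⟨n-1, by omega⟩ : Fin n) ∈ S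
            · rw [ham_high hv hSk hcS, hprop S hSk hcS]
              ring
            · rw [ham_low hv hSk hcS]
              have hz : ∑ i ∈ S, v (insert (⟨n-1, by omega⟩ : Fin n) (S.erase i)) = 0 := by
                apply Finset.sum_eq_zero
                intro i hi
                apply hprop
                · rw [Finset.card_insert_of_notMem
                    (fun h => hcS (Finset.mem_of_mem_erase h)),
                    Finset.card_erase_of_mem hi, hSk]
                  omega
                · exact Finset.mem_insert_self _ _
              rw [hz]
              ring
          · rw [ham_offcard hv _ hSk, hv.1 S hSk, mul_zero]
    · intro h
      have h' : ((n+1 : ℕ) : ℂ) = ((2*k : ℕ) : ℂ) := by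
        push_cast
        linear_combination h / 2
      have := Nat.cast_inj.mp h'
      omega
  · intro h2 v hv S
    have hcast : (n:ℂ) = 2 * (k:ℂ) := by exact_mod_cast congrArg (Nat.cast (R := ℂ)) h2.symm
    by_cases hSk : S.card = k
    · by_cases hcS : (⟨n-1, by omega⟩ : Fin n) ∈ S
      · rw [ham_high hv hSk hcS]
        rw [hcast]
        ring
      · rw [ham_low hv hSk hcS]
        have hR : (insert (⟨n-1, by omega⟩ : Fin n) S).card = k + 1 := by
          rw [Finset.card_insert_of_notMem hcS, hSk]
        have hci := specht_CI h2 hk1 hv hR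
        rw [Finset.sum_insert hcS, Finset.erase_insert hcS] at hci
        have hsum : ∑ i ∈ S, v ((insert (⟨n-1, by omega⟩ : Fin n) S).erase i) =
            ∑ i ∈ S, v (insert (⟨n-1, by omega⟩ : Fin n) (S.erase i)) := by
          apply Finset.sum_congr rfl
          intro i hi
          rw [Finset.erase_insert_of_ne (fun hh => hcS (by rw [hh]; exact hi))]
        rw [hsum] at hci
        have : ∑ i ∈ S, v (insert (⟨n-1, by omega⟩ : Fin n) (S.erase i)) = - v S := by
          linear_combination hci
        rw [this, hcast]
        ring
    · rw [ham_offcard hv _ hSk, hv.1 S hSk, mul_zero]
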